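/- Let θ*^r = (w_1*,…,w_r*, a_1*,…,a_r*) be an irreducible critical point of the training loss L^r of a two-layer network of width r (i.e. ∇L^r(θ*^r) = 0). Then every point of the set of symmetry-induced critical points Θ̄_{r→m}(θ*^r) is a critical point of the width-m training loss L^m: for every tuple s = (k_1,…,k_r) with k_i ≥ 1 and k_1+⋯+k_r = m, every permutation π ∈ S_m, and every θ^m ∈ P_π Γ̄_s(θ*^r), one has ∇L^m(θ^m) = 0. -/

import Mathlib

/-- The parameter space of a width-`m` two-layer network: each neuron `i` carries an
incoming weight vector (the coordinates `(i, Sum.inl k)`) and an outgoing weight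
vector (the coordinates `(i, Sum.inr o)`). -/
abbrev NNParam (din dout m : ℕ) := EuclideanSpace ℝ (Fin m × (Fin din ⊕ Fin dout))

/-- The incoming weight vector of neuron `i`. -/
def wOf {din dout m : ℕ} (θ : NNParam din dout m) (i : Fin m) : Fin din → ℝ :=
  fun k => θ (i, Sum.inl k)

/-- The outgoing weight vector of neuron `i`. -/
def aOf {din dout m : ℕ} (θ : NNParam din dout m) (i : Fin m) : Fin dout → ℝ :=
  fun o => θ (i, Sum.inr o)

/-- The training loss `L^m(θ) = (1/N) ∑_{(x,y) ∈ Trn} c(f⁽²⁾(x|θ), y)` of the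
two-layer network `f⁽²⁾(x|θ) = ∑ i, a_i σ(w_i · x)` of width `m`. -/
noncomputable def nnLoss {din dout : ℕ} (σ : ℝ → ℝ)
    (c : (Fin dout → ℝ) → (Fin dout → ℝ) → ℝ)
    {N : ℕ} (x : Fin N → Fin din → ℝ) (y : Fin N → Fin dout → ℝ)
    (m : ℕ) (θ : NNParam din dout m) : ℝ :=
  (1 / N : ℝ) * ∑ n, c (fun o => ∑ i, aOf θ i o * σ (∑ k, wOf θ i k * x n k)) (y n)

/-- A point is irreducible if its incoming weight vectors are pairwise distinct
and no outgoing weight vector is zero. -/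
def Irreducible' {din dout m : ℕ} (θ : NNParam din dout m) : Prop :=
  Function.Injective (wOf θ) ∧ ∀ i, aOf θ i ≠ 0

/-- Membership of a width-`m` point `θm` in the set of symmetry-induced critical
points `Θ̄_{r→m}(θr)`, i.e. `⋃_{s, π ∈ S_m} P_π Γ̄_s(θr)`: there is a surjective
grouping map `g : Fin m → Fin r` (surjectivity encodes `k_t ≥ 1`) and coefficients
`β i` with, for each group `t`, `∑_{g i = t} β i = 1`, such that neuron `i` of `θm`
has incoming weight `w*_{g i}` and outgoing weight `β i • a*_{g i}`. -/
def InSymmetryInducedSet {din dout r m : ℕ}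
    (θr : NNParam din dout r) (θm : NNParam din dout m) : Prop :=
  ∃ (g : Fin m → Fin r) (β : Fin m → ℝ),
    Function.Surjective g ∧
    (∀ i, wOf θm i = wOf θr (g i)) ∧
    (∀ i, aOf θm i = β i • aOf θr (g i)) ∧
    (∀ t : Fin r, ∑ i ∈ Finset.univ.filter (fun i => g i = t), β i = 1)

lemma core_coord (σ : ℝ → ℝ) (hσ : Differentiable ℝ σ) (A B U V : ℝ) :
    HasDerivAt (fun s : ℝ => (A + s * B) * σ (U + s * V))
      (B * σ U + A * (deriv σ U * V)) 0 := by
  have h1 : HasDerivAt (fun s : ℝ => A + s * B) B 0 := by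
    simpa using ((hasDerivAt_id (0:ℝ)).mul_const B).const_add A
  have h2 : HasDerivAt (fun s : ℝ => U + s * V) V 0 := by
    simpa using ((hasDerivAt_id (0:ℝ)).mul_const V).const_add U
  have h3 : HasDerivAt (fun s : ℝ => σ (U + s * V)) (deriv σ U * V) 0 := by
    have := (hσ (U + 0 * V)).hasDerivAt.comp (0:ℝ) h2
    simp only [zero_mul, add_zero] at this; exact this
  have := h1.mul h3
  simp only [zero_mul, add_zero] at this; exact this

lemma core_curve {dout m : ℕ} (σ : ℝ → ℝ) (hσ : Differentiable ℝ σ)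
    (cy : (Fin dout → ℝ) → ℝ) (hcy : Differentiable ℝ cy)
    (A B : Fin m → Fin dout → ℝ) (U V : Fin m → ℝ) :
    HasDerivAt (fun s : ℝ => cy (fun o => ∑ i, (A i o + s * B i o) * σ (U i + s * V i)))
      ((fderiv ℝ cy (fun o => ∑ i, A i o * σ (U i)))
        (fun o => ∑ i, (B i o * σ (U i) + A i o * (deriv σ (U i) * V i)))) 0 := by
  have hG : HasDerivAt (fun s : ℝ => (fun o => ∑ i, (A i o + s * B i o) * σ (U i + s * V i)))
      (fun o => ∑ i, (B i o * σ (U i) + A i o * (deriv σ (U i) * V i))) 0 := by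
    rw [hasDerivAt_pi]
    intro o
    exact HasDerivAt.fun_sum (fun i _ => core_coord σ hσ (A i o) (B i o) (U i) (V i))
  have := (hcy _).hasFDerivAt.comp_hasDerivAt 0 hG
  simp only [zero_mul, add_zero] at this; exact this

lemma nnLoss_differentiable {din dout m N : ℕ} (σ : ℝ → ℝ) (hσ : Differentiable ℝ σ)
    (c : (Fin dout → ℝ) → (Fin dout → ℝ) → ℝ)
    (hc : ∀ yv, Differentiable ℝ (fun v => c v yv))
    (x : Fin N → Fin din → ℝ) (y : Fin N → Fin dout → ℝ) :
    Differentiable ℝ (nnLoss σ c x y m) := by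
  unfold nnLoss
  apply Differentiable.const_mul
  apply Differentiable.fun_sum
  intro n _
  have hF : Differentiable ℝ (fun θ : NNParam din dout m =>
      (fun o => ∑ i, aOf θ i o * σ (∑ k, wOf θ i k * x n k))) := by
    apply differentiable_pi.mpr
    intro o
    apply Differentiable.fun_sum
    intro i _
    have ha : Differentiable ℝ (fun θ : NNParam din dout m => aOf θ i o) :=
      (EuclideanSpace.proj ((i, Sum.inr o)) : NNParam din dout m →L[ℝ] ℝ).differentiable
    have hw : Differentiable ℝ (fun θ : NNParam din dout m => ∑ k, wOf θ i k * x n k) := by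
      apply Differentiable.fun_sum
      intro k _
      exact ((EuclideanSpace.proj ((i, Sum.inl k)) : NNParam din dout m →L[ℝ] ℝ).differentiable).mul_const _
    exact ha.mul (hσ.comp hw)
  exact (hc (y n)).comp hF

lemma nnLoss_fderiv_apply {din dout m N : ℕ} (σ : ℝ → ℝ) (hσ : Differentiable ℝ σ)
    (c : (Fin dout → ℝ) → (Fin dout → ℝ) → ℝ)
    (hc : ∀ yv, Differentiable ℝ (fun v => c v yv))
    (x : Fin N → Fin din → ℝ) (y : Fin N → Fin dout → ℝ)
    (θ v : NNParam din dout m) :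
    fderiv ℝ (nnLoss σ c x y m) θ v =
      (1 / N : ℝ) * ∑ n, (fderiv ℝ (fun u => c u (y n))
          (fun o => ∑ i, aOf θ i o * σ (∑ k, wOf θ i k * x n k)))
        (fun o => ∑ i, (aOf v i o * σ (∑ k, wOf θ i k * x n k) +
            aOf θ i o * (deriv σ (∑ k, wOf θ i k * x n k) * ∑ k, wOf v i k * x n k))) := by
  have hline : HasDerivAt (fun s : ℝ => θ + s • v) v 0 := by
    simpa using ((hasDerivAt_id (0:ℝ)).smul_const v).const_add θ
  have h1 : HasDerivAt (fun s : ℝ => nnLoss σ c x y m (θ + s • v))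
      (fderiv ℝ (nnLoss σ c x y m) θ v) 0 := by
    have := ((nnLoss_differentiable σ hσ c hc x y (θ + (0:ℝ) • v)).hasFDerivAt).comp_hasDerivAt 0 hline
    simp only [zero_smul, add_zero] at this; exact this
  have h2 : HasDerivAt (fun s : ℝ => nnLoss σ c x y m (θ + s • v))
      ((1 / N : ℝ) * ∑ n, (fderiv ℝ (fun u => c u (y n))
          (fun o => ∑ i, aOf θ i o * σ (∑ k, wOf θ i k * x n k)))
        (fun o => ∑ i, (aOf v i o * σ (∑ k, wOf θ i k * x n k) +
            aOf θ i o * (deriv σ (∑ k, wOf θ i k * x n k) * ∑ k, wOf v i k * x n k)))) 0 := by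
    have hfun : (fun s : ℝ => nnLoss σ c x y m (θ + s • v)) =
        fun s : ℝ => (1 / N : ℝ) * ∑ n, (fun u => c u (y n))
          (fun o => ∑ i, (aOf θ i o + s * aOf v i o) *
            σ ((∑ k, wOf θ i k * x n k) + s * ∑ k, wOf v i k * x n k)) := by
      funext s
      unfold nnLoss
      congr 1
      apply Finset.sum_congr rfl
      intro n _
      congr 1
      funext o
      apply Finset.sum_congr rfl
      intro i _
      have ha : aOf (θ + s • v) i o = aOf θ i o + s * aOf v i o := by
        simp [aOf, PiLp.add_apply, PiLp.smul_apply, smul_eq_mul]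
      have hw : (∑ k, wOf (θ + s • v) i k * x n k) =
          (∑ k, wOf θ i k * x n k) + s * ∑ k, wOf v i k * x n k := by
        rw [Finset.mul_sum, ← Finset.sum_add_distrib]
        apply Finset.sum_congr rfl
        intro k _
        simp only [wOf, PiLp.add_apply, PiLp.smul_apply, smul_eq_mul]
        ring
      rw [ha, hw]
    rw [hfun]
    apply HasDerivAt.const_mul
    exact HasDerivAt.fun_sum fun n _ =>
      core_curve σ hσ (fun u => c u (y n)) (hc (y n)) _ _ _ _
  exact (h1.unique h2).trans rfl

lemma collapse_sum {m r : ℕ} (g : Fin m → Fin r) (β : Fin m → ℝ)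
    (hβ : ∀ t : Fin r, ∑ i ∈ Finset.univ.filter (fun i => g i = t), β i = 1)
    (φ : Fin r → ℝ) : ∑ i, β i * φ (g i) = ∑ t, φ t := by
  rw [← Finset.sum_fiberwise_of_maps_to (g := g) (fun i _ => Finset.mem_univ (g i))
      (fun i => β i * φ (g i))]
  apply Finset.sum_congr rfl
  intro t _
  have h : ∀ i ∈ Finset.univ.filter (fun i => g i = t), β i * φ (g i) = β i * φ t := by
    intro i hi
    rw [Finset.mem_filter] at hi
    rw [hi.2]
  rw [Finset.sum_congr rfl h, ← Finset.sum_mul, hβ t, one_mul]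

lemma single_a_dir {din dout m N : ℕ} (σ : ℝ → ℝ) (x : Fin N → Fin din → ℝ) (n : Fin N)
    (θ : NNParam din dout m) (i₀ : Fin m) (o₀ : Fin dout) :
    (fun o => ∑ i, (aOf (EuclideanSpace.single ((i₀, Sum.inr o₀) : Fin m × (Fin din ⊕ Fin dout)) (1:ℝ)) i o
          * σ (∑ k, wOf θ i k * x n k) +
        aOf θ i o * (deriv σ (∑ k, wOf θ i k * x n k) *
          ∑ k, wOf (EuclideanSpace.single ((i₀, Sum.inr o₀) : Fin m × (Fin din ⊕ Fin dout)) (1:ℝ)) i k * x n k)))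
      = (fun o => if o = o₀ then σ (∑ k, wOf θ i₀ k * x n k) else 0) := by
  funext o
  have h1 : ∀ (i : Fin m) (k : Fin din),
      wOf (EuclideanSpace.single ((i₀, Sum.inr o₀) : Fin m × (Fin din ⊕ Fin dout)) (1:ℝ)) i k = 0 := by
    intro i k; simp [wOf, EuclideanSpace.single_apply]
  have h2 : ∀ i : Fin m,
      aOf (EuclideanSpace.single ((i₀, Sum.inr o₀) : Fin m × (Fin din ⊕ Fin dout)) (1:ℝ)) i o
        = if i = i₀ ∧ o = o₀ then 1 else 0 := by
    intro i; simp [aOf, EuclideanSpace.single_apply, Prod.ext_iff]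
  simp only [h1, h2, zero_mul, mul_zero, Finset.sum_const_zero, add_zero, ite_mul, one_mul]
  by_cases ho : o = o₀
  · simp [ho]
  · simp [ho]

lemma single_w_dir {din dout m N : ℕ} (σ : ℝ → ℝ) (x : Fin N → Fin din → ℝ) (n : Fin N)
    (θ : NNParam din dout m) (i₀ : Fin m) (k₀ : Fin din) :
    (fun o => ∑ i, (aOf (EuclideanSpace.single ((i₀, Sum.inl k₀) : Fin m × (Fin din ⊕ Fin dout)) (1:ℝ)) i o
          * σ (∑ k, wOf θ i k * x n k) +
        aOf θ i o * (deriv σ (∑ k, wOf θ i k * x n k) *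
          ∑ k, wOf (EuclideanSpace.single ((i₀, Sum.inl k₀) : Fin m × (Fin din ⊕ Fin dout)) (1:ℝ)) i k * x n k)))
      = (fun o => aOf θ i₀ o * (deriv σ (∑ k, wOf θ i₀ k * x n k) * x n k₀)) := by
  funext o
  have h1 : ∀ i : Fin m,
      aOf (EuclideanSpace.single ((i₀, Sum.inl k₀) : Fin m × (Fin din ⊕ Fin dout)) (1:ℝ)) i o = 0 := by
    intro i; simp [aOf, EuclideanSpace.single_apply]
  have h2 : ∀ i : Fin m,
      (∑ k, wOf (EuclideanSpace.single ((i₀, Sum.inl k₀) : Fin m × (Fin din ⊕ Fin dout)) (1:ℝ)) i k * x n k)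
        = if i = i₀ then x n k₀ else 0 := by
    intro i
    have : ∀ k, wOf (EuclideanSpace.single ((i₀, Sum.inl k₀) : Fin m × (Fin din ⊕ Fin dout)) (1:ℝ)) i k
        = if i = i₀ ∧ k = k₀ then 1 else 0 := by
      intro k; simp [wOf, EuclideanSpace.single_apply, Prod.ext_iff]
    simp only [this, ite_mul, one_mul, zero_mul]
    by_cases hi : i = i₀
    · simp [hi]
    · simp [hi]
  simp only [h1, h2, zero_mul, zero_add, mul_ite, mul_zero]
  simp [Finset.sum_ite_eq']


lemma main_aux {din dout r m N : ℕ} (σ : ℝ → ℝ) (hσ : Differentiable ℝ σ)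
    (c : (Fin dout → ℝ) → (Fin dout → ℝ) → ℝ)
    (hcd : ∀ yv, Differentiable ℝ (fun v => c v yv))
    (x : Fin N → Fin din → ℝ) (y : Fin N → Fin dout → ℝ)
    (θr : NNParam din dout r)
    (hfr : fderiv ℝ (nnLoss σ c x y r) θr = 0)
    (θm : NNParam din dout m) (g : Fin m → Fin r) (β : Fin m → ℝ)
    (hw : ∀ i, wOf θm i = wOf θr (g i))
    (ha : ∀ i, aOf θm i = β i • aOf θr (g i))
    (hβ : ∀ t : Fin r, ∑ i ∈ Finset.univ.filter (fun i => g i = t), β i = 1) :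
    fderiv ℝ (nnLoss σ c x y m) θm = 0 := by
  have hS : ∀ (n : Fin N) (i : Fin m),
      (∑ k, wOf θm i k * x n k) = ∑ k, wOf θr (g i) k * x n k := by
    intro n i; simp only [hw]
  have hF : ∀ n : Fin N,
      (fun o => ∑ i, aOf θm i o * σ (∑ k, wOf θm i k * x n k))
        = (fun o => ∑ t, aOf θr t o * σ (∑ k, wOf θr t k * x n k)) := by
    intro n
    funext o
    have h : ∀ i : Fin m, aOf θm i o * σ (∑ k, wOf θm i k * x n k)
        = β i * (aOf θr (g i) o * σ (∑ k, wOf θr (g i) k * x n k)) := by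
      intro i
      rw [hS n i, ha i]
      simp only [Pi.smul_apply, smul_eq_mul]
      ring
    rw [Finset.sum_congr rfl (fun i _ => h i)]
    exact collapse_sum g β hβ (fun t => aOf θr t o * σ (∑ k, wOf θr t k * x n k))
  have Er : ∀ v : NNParam din dout r,
      (1 / N : ℝ) * ∑ n, (fderiv ℝ (fun u => c u (y n))
          (fun o => ∑ t, aOf θr t o * σ (∑ k, wOf θr t k * x n k)))
        (fun o => ∑ t, (aOf v t o * σ (∑ k, wOf θr t k * x n k) +
            aOf θr t o * (deriv σ (∑ k, wOf θr t k * x n k) * ∑ k, wOf v t k * x n k))) = 0 := by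
    intro v
    rw [← nnLoss_fderiv_apply σ hσ c hcd x y θr v, hfr]
    simp
  apply ContinuousLinearMap.coe_injective
  apply Module.Basis.ext ((EuclideanSpace.basisFun (Fin m × (Fin din ⊕ Fin dout)) ℝ).toBasis)
  rintro ⟨i₀, p⟩
  rw [OrthonormalBasis.coe_toBasis, EuclideanSpace.basisFun_apply]
  simp only [ContinuousLinearMap.coe_coe, ContinuousLinearMap.coe_zero, LinearMap.zero_apply,
    Pi.zero_apply]
  rw [nnLoss_fderiv_apply σ hσ c hcd x y θm (EuclideanSpace.single (i₀, p) 1)]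
  simp only [hF]
  cases p with
  | inr o₀ =>
      have hm := Er (EuclideanSpace.single ((g i₀, Sum.inr o₀)) 1)
      have hdir : ∀ n : Fin N,
          (fun o => ∑ i, (aOf (EuclideanSpace.single ((i₀, Sum.inr o₀) : Fin m × (Fin din ⊕ Fin dout)) (1:ℝ)) i o
              * σ (∑ k, wOf θm i k * x n k) +
            aOf θm i o * (deriv σ (∑ k, wOf θm i k * x n k) *
              ∑ k, wOf (EuclideanSpace.single ((i₀, Sum.inr o₀) : Fin m × (Fin din ⊕ Fin dout)) (1:ℝ)) i k * x n k)))
          = (fun o => ∑ t, (aOf (EuclideanSpace.single ((g i₀, Sum.inr o₀) : Fin r × (Fin din ⊕ Fin dout)) (1:ℝ)) t o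
              * σ (∑ k, wOf θr t k * x n k) +
            aOf θr t o * (deriv σ (∑ k, wOf θr t k * x n k) *
              ∑ k, wOf (EuclideanSpace.single ((g i₀, Sum.inr o₀) : Fin r × (Fin din ⊕ Fin dout)) (1:ℝ)) t k * x n k))) := by
        intro n
        rw [single_a_dir σ x n θm i₀ o₀, single_a_dir σ x n θr (g i₀) o₀]
        funext o
        rw [hS n i₀]
      simp only [hdir]
      exact hm
  | inl k₀ =>
      have hm := Er (EuclideanSpace.single ((g i₀, Sum.inl k₀)) 1)
      have step : ∀ n : Fin N, (fderiv ℝ (fun u => c u (y n))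
            (fun o => ∑ t, aOf θr t o * σ (∑ k, wOf θr t k * x n k)))
          (fun o => ∑ i, (aOf (EuclideanSpace.single ((i₀, Sum.inl k₀) : Fin m × (Fin din ⊕ Fin dout)) (1:ℝ)) i o
              * σ (∑ k, wOf θm i k * x n k) +
            aOf θm i o * (deriv σ (∑ k, wOf θm i k * x n k) *
              ∑ k, wOf (EuclideanSpace.single ((i₀, Sum.inl k₀) : Fin m × (Fin din ⊕ Fin dout)) (1:ℝ)) i k * x n k)))
          = β i₀ * (fderiv ℝ (fun u => c u (y n))
            (fun o => ∑ t, aOf θr t o * σ (∑ k, wOf θr t k * x n k)))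
          (fun o => ∑ t, (aOf (EuclideanSpace.single ((g i₀, Sum.inl k₀) : Fin r × (Fin din ⊕ Fin dout)) (1:ℝ)) t o
              * σ (∑ k, wOf θr t k * x n k) +
            aOf θr t o * (deriv σ (∑ k, wOf θr t k * x n k) *
              ∑ k, wOf (EuclideanSpace.single ((g i₀, Sum.inl k₀) : Fin r × (Fin din ⊕ Fin dout)) (1:ℝ)) t k * x n k))) := by
        intro n
        rw [single_w_dir σ x n θm i₀ k₀, single_w_dir σ x n θr (g i₀) k₀]
        have hd : (fun o => aOf θm i₀ o * (deriv σ (∑ k, wOf θm i₀ k * x n k) * x n k₀))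
            = β i₀ • (fun o => aOf θr (g i₀) o * (deriv σ (∑ k, wOf θr (g i₀) k * x n k) * x n k₀)) := by
          funext o
          rw [hS n i₀, ha i₀]
          simp only [Pi.smul_apply, smul_eq_mul]
          ring
        rw [hd, map_smul, smul_eq_mul]
      simp only [step]
      rw [← Finset.mul_sum, mul_left_comm, hm, mul_zero]

/-- If `θr` is an irreducible critical point of the width-`r`
training loss `L^r`, then every point of the set of symmetry-induced critical points
`Θ̄_{r→m}(θr)` is a critical point of the width-`m` training loss `L^m`. -/
theorem symmetryInduced_points_are_critical
    {din dout r m N : ℕ} (hN : 0 < N)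
    (σ : ℝ → ℝ) (hσ : ContDiff ℝ 1 σ)
    (c : (Fin dout → ℝ) → (Fin dout → ℝ) → ℝ)
    (hc0 : ∀ v yv, 0 ≤ c v yv)
    (hceq : ∀ v yv, c v yv = 0 ↔ v = yv)
    (hcC1 : ∀ yv, ContDiff ℝ 1 (fun v => c v yv))
    (x : Fin N → Fin din → ℝ) (y : Fin N → Fin dout → ℝ)
    (θr : NNParam din dout r)
    (hirr : Irreducible' θr)
    (hcrit : gradient (nnLoss σ c x y r) θr = 0)
    (θm : NNParam din dout m)
    (hmem : InSymmetryInducedSet θr θm) :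
    gradient (nnLoss σ c x y m) θm = 0 := by
  obtain ⟨g, β, -, hw, ha, hβ⟩ := hmem
  have hfr : fderiv ℝ (nnLoss σ c x y r) θr = 0 := by
    rwa [gradient, map_eq_zero_iff _ (LinearIsometryEquiv.injective _)] at hcrit
  have hfm : fderiv ℝ (nnLoss σ c x y m) θm = 0 :=
    main_aux σ (hσ.differentiable one_ne_zero) c (fun yv => (hcC1 yv).differentiable one_ne_zero)
      x y θr hfr θm g β hw ha hβ
  rw [gradient, hfm, map_zero]
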